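/- Let G = (S, E) be a path-complete labeled digraph on a finite alphabet Σ with S finite. If G is connected and sink-free, then for every T ≥ 0 the T-forward composition lift G^{∘T} is connected. Dually, if G is connected and source-free, then for every T ≥ 0 the T-backward composition lift G^{∘−T} is connected. -/

import Mathlib

open Filter

/-- A labeled digraph on node type `S` with alphabet `A`, given by its edge set,
is path-complete if every nonempty word is the label sequence of some path. -/
def PathComplete {S A : Type*} (E : Set (S × S × A)) : Prop :=
  ∀ w : List A, w ≠ [] → ∃ s : Fin (w.length + 1) → S,
    ∀ j : Fin w.length, (s j.castSucc, s j.succ, w.get j) ∈ E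

/-- `G₁` (edge set `E₁`) simulates `G₂` (edge set `E₂`). -/
def Simulates {S₁ S₂ A : Type*} (E₁ : Set (S₁ × S₁ × A)) (E₂ : Set (S₂ × S₂ × A)) : Prop :=
  ∃ R : S₂ → S₁, ∀ a b i, (a, b, i) ∈ E₂ → (R a, R b, i) ∈ E₁

/-- Simulation where the simulating graph has node set `V₁` inside ambient type `N₁`. -/
def SimulatesOn {N₁ N₂ A : Type*} (V₁ : Set N₁) (E₁ : Set (N₁ × N₁ × A))
    (E₂ : Set (N₂ × N₂ × A)) : Prop :=
  ∃ R : N₂ → N₁, (∀ s, R s ∈ V₁) ∧ ∀ a b i, (a, b, i) ∈ E₂ → (R a, R b, i) ∈ E₁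

/-- Class K∞ function. -/
def IsKInfty (α : ℝ → ℝ) : Prop :=
  Continuous α ∧ StrictMono α ∧ α 0 = 0 ∧ Tendsto α atTop atTop

/-- Membership in `Lyap₀(ℝⁿ)`. -/
def IsLyap {n : ℕ} (V : EuclideanSpace ℝ (Fin n) → ℝ) : Prop :=
  Continuous V ∧ V 0 = 0 ∧ (∀ x, x ≠ 0 → 0 < V x) ∧
  ∃ α₁ α₂ : ℝ → ℝ, IsKInfty α₁ ∧ IsKInfty α₂ ∧ ∀ x, α₁ ‖x‖ ≤ V x ∧ V x ≤ α₂ ‖x‖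

/-- `(V_s)_{s}` together with `γ` is admissible for the graph with edge set `E`
and the switched maps `f`. -/
def Admissible {S A : Type*} {n : ℕ} (E : Set (S × S × A))
    (f : A → EuclideanSpace ℝ (Fin n) → EuclideanSpace ℝ (Fin n))
    (V : S → EuclideanSpace ℝ (Fin n) → ℝ) (γ : ℝ) : Prop :=
  ∀ a b i, (a, b, i) ∈ E → ∀ x, V a x ≥ γ * V b (f i x)

/-- Edge set of the `T`-sum lift: nodes are multisets of size `T`. -/
def sumLiftEdgesT {S A : Type*} (E : Set (S × S × A)) (T : ℕ) :
    Set (Multiset S × Multiset S × A) :=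
  { e | ∃ L : List (S × S), L.length = T ∧ (∀ p ∈ L, (p.1, p.2, e.2.2) ∈ E) ∧
      e.1 = ↑(L.map Prod.fst) ∧ e.2.1 = ↑(L.map Prod.snd) }

/-- Edge set of the sum lift `G^⊕` (union over all `T ≥ 1`). -/
def sumLiftEdges {S A : Type*} (E : Set (S × S × A)) : Set (Multiset S × Multiset S × A) :=
  ⋃ T ∈ Set.Ici 1, sumLiftEdgesT E T

/-- Edge set of the `T`-forward composition lift `G^{∘T}`; a word `(j₁, …, j_T)` is
encoded as the list `[j₁, …, j_T]`.  For `T = 0` this is `G` itself (with empty words). -/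
def fwdLiftEdges {S A : Type*} (E : Set (S × S × A)) :
    ℕ → Set ((S × List A) × (S × List A) × A)
  | 0 => { e | ∃ (a b : S) (i : A), (a, b, i) ∈ E ∧ e = ((a, []), (b, []), i) }
  | T + 1 => { e | ∃ (a b : S) (i : A) (l : List A) (jT : A), (a, b, i) ∈ E ∧ l.length = T ∧
      e = ((a, l ++ [jT]), (b, i :: l), jT) }

/-- Edge set of the `T`-backward composition lift `G^{∘-T}`. -/
def bwdLiftEdges {S A : Type*} (E : Set (S × S × A)) :
    ℕ → Set ((S × List A) × (S × List A) × A)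
  | 0 => { e | ∃ (a b : S) (i : A), (a, b, i) ∈ E ∧ e = ((a, []), (b, []), i) }
  | T + 1 => { e | ∃ (a b : S) (i : A) (l : List A) (jT : A), (a, b, i) ∈ E ∧ l.length = T ∧
      e = ((a, i :: l), (b, l ++ [jT]), jT) }

/-- The underlying undirected graph on node set `V` with labeled edge set `E` is connected. -/
def ConnectedOn {N A : Type*} (V : Set N) (E : Set (N × N × A)) : Prop :=
  ∀ x ∈ V, ∀ y ∈ V,
    Relation.ReflTransGen (fun u v => ∃ i, (u, v, i) ∈ E ∨ (v, u, i) ∈ E) x y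

/-- Transpose of a labeled digraph (reverse all edges). -/
def transposeEdges {S A : Type*} (E : Set (S × S × A)) : Set (S × S × A) :=
  { e | (e.2.1, e.1, e.2.2) ∈ E }

/-- Strong connectedness of a labeled digraph. -/
def StronglyConnectedEdges {S A : Type*} (E : Set (S × S × A)) : Prop :=
  ∀ x y : S, Relation.ReflTransGen (fun u v => ∃ i, (u, v, i) ∈ E) x y

section CompLiftAux

variable {S A : Type*}

/-- Undirected adjacency relation of a labeled edge set. -/
def liftRel {N A : Type*} (F : Set (N × N × A)) (u v : N) : Prop :=
  ∃ i, (u, v, i) ∈ F ∨ (v, u, i) ∈ F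

lemma liftRel_symm {N A : Type*} (F : Set (N × N × A)) : Symmetric (liftRel F) := by
  rintro u v ⟨i, h | h⟩ <;> exact ⟨i, by tauto⟩

lemma take_succ_aux (u w : List A) (i : A) (T' : ℕ)
    (hlen : T' + 1 ≤ (u ++ w).length) :
    i :: ((u ++ w).take (T' + 1)).dropLast = ((i :: u) ++ w).take (T' + 1) := by
  rw [List.dropLast_eq_take, List.take_take, List.length_take, List.cons_append,
    List.take_succ_cons]
  have h : ((T' + 1) ⊓ (u ++ w).length - 1) ⊓ (T' + 1) = T' := by omega
  rw [h]

/-- Walking forward `n` steps fully refreshes the memory. -/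
lemma walk_aux (E : Set (S × S × A)) (F : Set ((S × List A) × (S × List A) × A)) (T' : ℕ)
    (estep : ∀ a b i, (a, b, i) ∈ E → ∀ w : List A, w.length = T' + 1 →
      liftRel F (a, w) (b, i :: w.dropLast))
    (hsink : ∀ s : S, ∃ (b : S) (i : A), (s, b, i) ∈ E) (n : ℕ) (a : S) :
    ∃ (c : S) (u : List A), u.length = n ∧ ∀ w : List A, w.length = T' + 1 →
      Relation.ReflTransGen (liftRel F) (a, w) (c, (u ++ w).take (T' + 1)) := by
  induction n with
  | zero =>
      refine ⟨a, [], rfl, fun w hw => ?_⟩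
      rw [List.nil_append, List.take_of_length_le (by omega)]
  | succ n ih =>
      obtain ⟨c, u, hu, hwalk⟩ := ih
      obtain ⟨b, i, hbi⟩ := hsink c
      refine ⟨b, i :: u, by simp [hu], fun w hw => ?_⟩
      refine (hwalk w hw).tail ?_
      have hlen : ((u ++ w).take (T' + 1)).length = T' + 1 := by
        rw [List.length_take, List.length_append, hu, hw]; omega
      have := estep c b i hbi _ hlen
      rwa [take_succ_aux u w i T' (by rw [List.length_append, hu, hw]; omega)] at this

/-- Two nodes with the same base state are connected in the lift. -/
lemma same_base_aux (E : Set (S × S × A)) (F : Set ((S × List A) × (S × List A) × A)) (T' : ℕ)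
    (estep : ∀ a b i, (a, b, i) ∈ E → ∀ w : List A, w.length = T' + 1 →
      liftRel F (a, w) (b, i :: w.dropLast))
    (hsink : ∀ s : S, ∃ (b : S) (i : A), (s, b, i) ∈ E) (a : S) (w w' : List A)
    (hw : w.length = T' + 1) (hw' : w'.length = T' + 1) :
    Relation.ReflTransGen (liftRel F) (a, w) (a, w') := by
  obtain ⟨c, u, hu, hwalk⟩ := walk_aux E F T' estep hsink (T' + 1) a
  have hL : ∀ v : List A, v.length = T' + 1 → (u ++ v).take (T' + 1) = u := by
    intro v hv; rw [← hu]; exact List.take_left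
  have h1 := hwalk w hw
  have h2 := hwalk w' hw'
  rw [hL w hw] at h1
  rw [hL w' hw'] at h2
  exact h1.trans ((@Relation.ReflTransGen.stdSymm _ _ ⟨fun x y h => liftRel_symm F h⟩).symm _ _ h2)

/-- Generic connectivity lemma for composition lifts. -/
lemma generic_conn (E : Set (S × S × A)) (F : Set ((S × List A) × (S × List A) × A)) (T' : ℕ)
    (estep : ∀ a b i, (a, b, i) ∈ E → ∀ w : List A, w.length = T' + 1 →
      liftRel F (a, w) (b, i :: w.dropLast))
    (hsink : ∀ s : S, ∃ (b : S) (i : A), (s, b, i) ∈ E)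
    (hconn : ConnectedOn (Set.univ : Set S) E) :
    ConnectedOn {p : S × List A | p.2.length = T' + 1} F := by
  rintro ⟨a, w⟩ hw ⟨b, v⟩ hv
  simp only [Set.mem_setOf_eq] at hw hv
  have key : ∀ c : S, Relation.ReflTransGen
      (fun u v => ∃ i, (u, v, i) ∈ E ∨ (v, u, i) ∈ E) a c →
      Relation.ReflTransGen (liftRel F) (a, w) (c, w) := by
    intro c hc
    induction hc with
    | refl => exact Relation.ReflTransGen.refl
    | tail _ hdc ih =>
        rename_i d c' _
        obtain ⟨i, h | h⟩ := hdc
        · refine ih.trans ?_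
          have h1 := estep d c' i h w hw
          have h2 := same_base_aux E F T' estep hsink c' (i :: w.dropLast) w
            (by rw [List.length_cons, List.length_dropLast, hw]; omega) hw
          exact (Relation.ReflTransGen.single h1).trans h2
        · refine ih.trans ?_
          have h1 := estep c' d i h w hw
          have h2 := same_base_aux E F T' estep hsink d w (i :: w.dropLast)
            hw (by rw [List.length_cons, List.length_dropLast, hw]; omega)
          exact h2.trans (Relation.ReflTransGen.single ((liftRel_symm F) h1))
  have hab := hconn a (Set.mem_univ a) b (Set.mem_univ b)
  exact (key b hab).trans (same_base_aux E F T' estep hsink b w v hw hv)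

end CompLiftAux

/-- Lemma: `T`-composition lifts preserve connectedness.  If a
path-complete graph is connected and sink-free then every `T`-forward composition lift
is connected; dually, if it is connected and source-free then every `T`-backward
composition lift is connected. -/
theorem comp_lift_preserves_connectedness {S A : Type*} [Fintype S] [Fintype A]
    (E : Set (S × S × A)) (hpc : PathComplete E) :
    (ConnectedOn (Set.univ : Set S) E → (∀ s : S, ∃ (b : S) (i : A), (s, b, i) ∈ E) →
      ∀ T : ℕ, ConnectedOn {p : S × List A | p.2.length = T} (fwdLiftEdges E T)) ∧
    (ConnectedOn (Set.univ : Set S) E → (∀ s : S, ∃ (a : S) (i : A), (a, s, i) ∈ E) →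
      ∀ T : ℕ, ConnectedOn {p : S × List A | p.2.length = T} (bwdLiftEdges E T)) := by
  constructor
  · intro hconn hsink T
    cases T with
    | zero =>
        rintro ⟨a, w⟩ hw ⟨b, v⟩ hv
        simp only [Set.mem_setOf_eq, List.length_eq_zero_iff] at hw hv
        subst hw; subst hv
        have hab := hconn a (Set.mem_univ a) b (Set.mem_univ b)
        refine Relation.ReflTransGen.lift (fun s : S => ((s, []) : S × List A)) ?_ _ _ hab
        rintro u v ⟨i, h | h⟩
        · exact ⟨i, Or.inl ⟨u, v, i, h, rfl⟩⟩
        · exact ⟨i, Or.inr ⟨v, u, i, h, rfl⟩⟩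
    | succ T' =>
        refine generic_conn E (fwdLiftEdges E (T' + 1)) T' ?_ hsink hconn
        intro a b i hab w hw
        have hne : w ≠ [] := by intro h; rw [h] at hw; simp at hw
        refine ⟨w.getLast hne, Or.inl ?_⟩
        exact ⟨a, b, i, w.dropLast, w.getLast hne, hab,
          by rw [List.length_dropLast, hw]; omega, by
            rw [List.dropLast_append_getLast hne]⟩
  · intro hconn hsrc T
    cases T with
    | zero =>
        rintro ⟨a, w⟩ hw ⟨b, v⟩ hv
        simp only [Set.mem_setOf_eq, List.length_eq_zero_iff] at hw hv
        subst hw; subst hv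
        have hab := hconn a (Set.mem_univ a) b (Set.mem_univ b)
        refine Relation.ReflTransGen.lift (fun s : S => ((s, []) : S × List A)) ?_ _ _ hab
        rintro u v ⟨i, h | h⟩
        · exact ⟨i, Or.inl ⟨u, v, i, h, rfl⟩⟩
        · exact ⟨i, Or.inr ⟨v, u, i, h, rfl⟩⟩
    | succ T' =>
        have hconn' : ConnectedOn (Set.univ : Set S) (transposeEdges E) := by
          intro x hx y hy
          refine Relation.ReflTransGen.mono ?_ _ _ (hconn x hx y hy)
          rintro u v ⟨i, h | h⟩
          · exact ⟨i, Or.inr h⟩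
          · exact ⟨i, Or.inl h⟩
        refine generic_conn (transposeEdges E) (bwdLiftEdges E (T' + 1)) T' ?_
          (fun s => by obtain ⟨a, i, h⟩ := hsrc s; exact ⟨a, i, h⟩) hconn'
        intro a b i hab w hw
        have hab' : (b, a, i) ∈ E := hab
        have hne : w ≠ [] := by intro h; rw [h] at hw; simp at hw
        refine ⟨w.getLast hne, Or.inr ?_⟩
        exact ⟨b, a, i, w.dropLast, w.getLast hne, hab',
          by rw [List.length_dropLast, hw]; omega, by
            rw [List.dropLast_append_getLast hne]⟩
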